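/- Let A be a unital Banach algebra over ℂ and let X_1, …, X_n ∈ A. Define F : ℝ → A by F(s) = (1/2)(∏_{j=1}^{n} exp(s • X_j) + ∏_{j=n}^{1} exp(s • X_j)). Then F(0) = 1, the first derivative of F at 0 equals Σ_j X_j, and the second derivative of F at 0 equals (Σ_j X_j)². In particular the derivatives of F at 0 up to order two agree with those of s ↦ exp(s • Σ_j X_j). -/

import Mathlib

open NormedSpace

/-- The symmetrized first-order Trotter product
`F(s) = ½(∏_{j=1}^{n} exp(s • X_j) + ∏_{j=n}^{1} exp(s • X_j))`. -/
noncomputable def symTrotter {A : Type*} [NormedRing A] [NormedAlgebra ℂ A]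
    [CompleteSpace A] {n : ℕ} (X : Fin n → A) (s : ℝ) : A :=
  (1 / 2 : ℝ) • ((List.ofFn fun j => exp (s • X j)).prod
    + ((List.ofFn fun j => exp (s • X j)).reverse).prod)

section Aux
set_option linter.unusedSectionVars false

variable {A : Type*} [NormedRing A] [NormedAlgebra ℂ A] [CompleteSpace A]

private noncomputable def fL (L : List A) (s : ℝ) : A :=
  (L.map fun a => exp (s • a)).prod

private noncomputable def gL : List A → ℝ → A
  | [], _ => 0
  | a :: L, s => a * exp (s • a) * fL L s + exp (s • a) * gL L s

private noncomputable def hL : List A → ℝ → A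
  | [], _ => 0
  | a :: L, s => (a * (exp (s • a) * a) * fL L s + a * exp (s • a) * gL L s)
      + (exp (s • a) * a * gL L s + exp (s • a) * hL L s)

private noncomputable def qL : List A → A
  | [] => 0
  | a :: L => a ^ 2 + 2 * (a * L.sum) + qL L

private lemma hasDerivAt_expf (a : A) (s : ℝ) :
    HasDerivAt (fun u : ℝ => exp (u • a)) (exp (s • a) * a) s := by
  exact hasDerivAt_exp_smul_const a s

private lemma comm_exp (a : A) (s : ℝ) : exp (s • a) * a = a * exp (s • a) :=
  ((((Commute.refl a).smul_left s).exp_left)).eq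

private lemma fL_zero (L : List A) : fL L 0 = 1 := by
  induction L with
  | nil => simp [fL]
  | cons a L ih =>
    rw [show fL (a :: L) 0 = exp ((0:ℝ) • a) * fL L 0 from rfl, ih]
    simp [exp_zero]

private lemma gL_zero (L : List A) : gL L 0 = L.sum := by
  induction L with
  | nil => simp [gL]
  | cons a L ih => simp [gL, exp_zero, fL_zero, ih]

private lemma hL_zero (L : List A) : hL L 0 = qL L := by
  induction L with
  | nil => simp [hL, qL]
  | cons a L ih =>
    simp only [hL, qL, zero_smul, exp_zero, fL_zero, gL_zero, ih, mul_one, one_mul]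
    noncomm_ring

private lemma hasDerivAt_fL (L : List A) (s : ℝ) : HasDerivAt (fL L) (gL L s) s := by
  induction L with
  | nil => exact hasDerivAt_const s (1 : A)
  | cons a L ih =>
    have h : HasDerivAt (fL (a :: L))
        (exp (s • a) * a * fL L s + exp (s • a) * gL L s) s := by
      have := (hasDerivAt_expf a s).mul ih
      exact this
    rw [comm_exp] at h
    exact h

private lemma hasDerivAt_gL (L : List A) (s : ℝ) : HasDerivAt (gL L) (hL L s) s := by
  induction L with
  | nil => simpa [gL, hL] using hasDerivAt_const s (0 : A)
  | cons a L ih =>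
    have h1 : HasDerivAt (fun u : ℝ => a * exp (u • a) * fL L u)
        (a * (exp (s • a) * a) * fL L s + a * exp (s • a) * gL L s) s := by
      have := (((hasDerivAt_expf a s).const_mul a)).mul (hasDerivAt_fL L s)
      simpa [mul_assoc, Pi.mul_def] using this
    have h2 : HasDerivAt (fun u : ℝ => exp (u • a) * gL L u)
        (exp (s • a) * a * gL L s + exp (s • a) * hL L s) s :=
      (hasDerivAt_expf a s).mul ih
    have := h1.add h2
    simpa [gL, hL, Pi.add_def] using this

private lemma qL_concat (M : List A) (a : A) :
    qL (M ++ [a]) = qL M + 2 * (M.sum * a) + a ^ 2 := by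
  induction M with
  | nil => simp [qL]
  | cons b M ih =>
    have he : (b :: M) ++ [a] = b :: (M ++ [a]) := rfl
    rw [he]
    simp only [qL, ih, List.sum_append, List.sum_cons, List.sum_nil, add_zero]
    noncomm_ring

private lemma qL_add_reverse (L : List A) : qL L + qL L.reverse = 2 * L.sum ^ 2 := by
  induction L with
  | nil => simp [qL]
  | cons a L ih =>
    rw [List.reverse_cons, qL_concat, List.sum_reverse]
    simp only [qL, List.sum_cons]
    calc a ^ 2 + 2 * (a * L.sum) + qL L + (qL L.reverse + 2 * (L.sum * a) + a ^ 2)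
        = (qL L + qL L.reverse) + (a ^ 2 + 2 * (a * L.sum) + 2 * (L.sum * a) + a ^ 2) := by
          noncomm_ring
      _ = 2 * (a + L.sum) ^ 2 := by rw [ih]; noncomm_ring

end Aux

/-- The symmetrized Trotter product is a second-order approximation of the exponential:
`F(0) = 1`, `F'(0) = Σ_j X_j`, `F''(0) = (Σ_j X_j)²`, so the derivatives of `F` at `0`
up to order two agree with those of `s ↦ exp(s • Σ_j X_j)`. -/
theorem stmt_7 {A : Type*} [NormedRing A] [NormedAlgebra ℂ A]
    [CompleteSpace A] [NormOneClass A] (n : ℕ) (X : Fin n → A) :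
    symTrotter X 0 = 1
      ∧ deriv (symTrotter X) 0 = ∑ j : Fin n, X j
      ∧ iteratedDeriv 2 (symTrotter X) 0 = (∑ j : Fin n, X j) ^ 2
      ∧ ∀ k ≤ 2, iteratedDeriv k (symTrotter X) 0
          = iteratedDeriv k (fun s : ℝ => exp (s • ∑ j : Fin n, X j)) 0 := by
  classical
  set L : List A := List.ofFn X with hLdef
  have hsum : L.sum = ∑ j : Fin n, X j := by simp [hLdef, List.sum_ofFn]
  set S : A := ∑ j : Fin n, X j with hS
  -- symTrotter as combination of fL
  have hrepr : symTrotter X = fun s =>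
      (1 / 2 : ℝ) • (fL L s + fL L.reverse s) := by
    funext s
    simp only [symTrotter, fL]
    congr 2
    · simp [hLdef, List.map_ofFn]; rfl
    · rw [List.map_reverse]
      congr 1
      simp [hLdef, List.map_ofFn]; rfl
  -- first derivative
  have hF : ∀ s, HasDerivAt (symTrotter X)
      ((1 / 2 : ℝ) • (gL L s + gL L.reverse s)) s := by
    intro s
    rw [hrepr]
    exact ((hasDerivAt_fL L s).add (hasDerivAt_fL L.reverse s)).const_smul _
  have hderiv : deriv (symTrotter X) = fun s =>
      (1 / 2 : ℝ) • (gL L s + gL L.reverse s) := funext fun s => (hF s).deriv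
  have hF0 : symTrotter X 0 = 1 := by
    rw [hrepr]
    simp only [fL_zero]
    rw [← two_smul ℝ (1 : A), smul_smul]
    norm_num
  have hF1 : deriv (symTrotter X) 0 = S := by
    rw [hderiv]
    simp only [gL_zero, List.sum_reverse, hsum, ← hS]
    rw [← two_smul ℝ S, smul_smul]
    norm_num
  have hF2 : iteratedDeriv 2 (symTrotter X) 0 = S ^ 2 := by
    have h2 : deriv (deriv (symTrotter X)) 0
        = (1 / 2 : ℝ) • (hL L 0 + hL L.reverse 0) := by
      rw [hderiv]
      exact (((hasDerivAt_gL L 0).add (hasDerivAt_gL L.reverse 0)).const_smul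
        ((1 : ℝ) / 2)).deriv
    rw [iteratedDeriv_succ, iteratedDeriv_one, h2, hL_zero, hL_zero, qL_add_reverse, hsum]
    rw [show (2 : A) * S ^ 2 = (2 : ℝ) • S ^ 2 by rw [two_smul, two_mul], smul_smul]
    norm_num
  refine ⟨hF0, hF1, hF2, ?_⟩
  -- exponential side
  have hE : ∀ s, HasDerivAt (fun u : ℝ => exp (u • S)) (exp (s • S) * S) s :=
    fun s => hasDerivAt_expf S s
  have hEd : deriv (fun u : ℝ => exp (u • S)) = fun s => exp (s • S) * S :=
    funext fun s => (hE s).deriv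
  intro k hk
  interval_cases k
  · simp [iteratedDeriv_zero, hF0, exp_zero]
  · rw [iteratedDeriv_one, iteratedDeriv_one, hF1, hEd]
    simp [exp_zero]
  · rw [hF2, iteratedDeriv_succ, iteratedDeriv_one, hEd]
    have : deriv (fun s : ℝ => exp (s • S) * S) 0 = (exp ((0:ℝ) • S) * S) * S :=
      ((hE 0).mul_const S).deriv
    rw [this]
    simp [exp_zero, sq]
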